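/- Let (U, A) be a left bialgebroid which is left Hopf and M a stable anti Yetter-Drinfel'd contramodule over U with contraaction γ. For each q, let θ: Hom_U(U^{⊗_{A^op}(q+1)}, M) ≅ Hom_{A^op}(U^{⊗_{A^op} q}, M) be g ↦ g(1, ·), let η: Hom_U(U ⊗_A U^{⊗_{A^op} q}, M) ≅ Hom_U(U^{⊗_{A^op}(q+1)}, M) be η(f)(v, u¹, …, u^q) = f(v₍₁₎ ⊗ (v₍₂₎u¹, u², …, u^q)), and let χ: Hom_U(U^{⊗_{A^op} q} ⊗_A U, M) ≅ Hom_U(U^{⊗_{A^op}(q+1)}, M) be χ(f)(u¹, …, u^q, v) = f((u¹₍₁₎, …, u^q₍₁₎) ⊗ u¹₍₂₎⋯u^q₍₂₎ v). Then the composite θ ∘ χ ∘ tr ∘ η⁻¹ ∘ θ⁻¹, where tr: Hom_U(U ⊗_A U^{⊗_{A^op} q}, M) ≅ Hom_U(U^{⊗_{A^op} q} ⊗_A U, M) is the trace isomorphism (tr f)(p ⊗ n) = γ(f(n ⊗ − p)), equals the cocyclic operator τ on C^q(U,M) = Hom_{A^op}(U^{⊗_{A^op} q}, M) given by (τ f)(u¹,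 …, u^q) = γ(((u¹₍₂₎ ⋯ u^{q-1}₍₂₎ u^q) · f)(−, u¹₍₁₎, …, u^{q-1}₍₁₎)), where (u · f)(v,…) = u₊ f(u₋ v, …). -/

import Mathlib

open scoped TensorProduct
open TensorProduct

noncomputable section

variable (k A U : Type) [CommRing k] [Ring A] [Ring U] [Algebra k A] [Algebra k U]

/-- The `k`-submodule of `N ⊗[k] M` of relations defining the `A`-module tensor
product `N ⊗_A M` of two left `U`-modules, where the right `A`-action on `N` is
`n ◃ a := t a • n` and the left `A`-action on `M` is `a ▹ m := s a • m`
(the `A`-bimodule structure `a ▹ m ◃ b = s a • t b • m` induced by the forgetful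
functor along the source and target maps `s`, `t`). -/
def relA (s t : A → U) (N M : Type) [AddCommGroup N] [Module k N] [Module U N]
    [AddCommGroup M] [Module k M] [Module U M] : Submodule k (N ⊗[k] M) :=
  Submodule.span k
    {z | ∃ (a : A) (n : N) (m : M), z = (t a • n) ⊗ₜ[k] m - n ⊗ₜ[k] (s a • m)}

/-- Relations defining `U ⊗_{Aᵒᵖ} U` (the source of the Hopf–Galois map `α_ℓ`):
`(u * t a) ⊗ v - u ⊗ (t a * v)`. -/
def relOp (t : A → U) : Submodule k (U ⊗[k] U) :=
  Submodule.span k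
    {z | ∃ (a : A) (u v : U), z = (u * t a) ⊗ₜ[k] v - u ⊗ₜ[k] (t a * v)}

/-- Relations defining the triple tensor product `U ⊗_A U ⊗_A U` inside
`U ⊗[k] (U ⊗[k] U)`. -/
def rel3 (s t : A → U) : Submodule k (U ⊗[k] (U ⊗[k] U)) :=
  Submodule.span k
    ({z | ∃ (a : A) (u v w : U),
        z = (t a * u) ⊗ₜ[k] (v ⊗ₜ[k] w) - u ⊗ₜ[k] ((s a * v) ⊗ₜ[k] w)} ∪
     {z | ∃ (a : A) (u v w : U),
        z = u ⊗ₜ[k] ((t a * v) ⊗ₜ[k] w) - u ⊗ₜ[k] (v ⊗ₜ[k] (s a * w))})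

/-- A left bialgebroid `(U, A)` over a commutative ring `k`, presented with a
set-theoretic lift `comul : U → U ⊗[k] U` of the coproduct `Δ : U → U ⊗_A U`;
all structure equations involving `Δ` are stated modulo the relation submodule
`relA`, resp. on arbitrary finite decompositions into elementary tensors
(= Sweedler components). -/
structure LeftBialgebroid : Type 1 where
  /-- the source map, an algebra map `A → U` -/
  s : A →ₐ[k] U
  /-- the target map, an algebra anti-homomorphism `A → U` -/
  t : A →ₗ[k] U
  t_one : t 1 = 1
  t_mul : ∀ a b : A, t (a * b) = t b * t a
  st_comm : ∀ a b : A, s a * t b = t b * s a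
  /-- the counit -/
  counit : U →ₗ[k] A
  /-- a lift of the coproduct -/
  comul : U → U ⊗[k] U
  comul_add : ∀ u v : U, comul (u + v) - comul u - comul v ∈ relA k A U s t U U
  comul_ksmul : ∀ (c : k) (u : U), comul (c • u) - c • comul u ∈ relA k A U s t U U
  comul_one : comul 1 - (1 : U) ⊗ₜ[k] (1 : U) ∈ relA k A U s t U U
  comul_s : ∀ a : A, comul (s a) - (s a) ⊗ₜ[k] (1 : U) ∈ relA k A U s t U U
  comul_t : ∀ a : A, comul (t a) - (1 : U) ⊗ₜ[k] (t a) ∈ relA k A U s t U U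
  comul_mul : ∀ u v : U, comul (u * v) - comul u * comul v ∈ relA k A U s t U U
  /-- The coproduct takes values in the Takeuchi product `U ×_A U`. -/
  takeuchi : ∀ (u : U) (a : A),
    TensorProduct.map (LinearMap.mulRight k (t a)) LinearMap.id (comul u) -
      TensorProduct.map LinearMap.id (LinearMap.mulRight k (s a)) (comul u)
      ∈ relA k A U s t U U
  counit_one : counit 1 = 1
  counit_s : ∀ a : A, counit (s a) = a
  counit_t : ∀ a : A, counit (t a) = a
  counit_sl : ∀ (a : A) (u : U), counit (s a * u) = a * counit u
  counit_tl : ∀ (a : A) (u : U), counit (t a * u) = counit u * a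
  /-- left counitality: `s (ε u₍₁₎) u₍₂₎ = u` -/
  counit_comul_left : ∀ (u : U) {κ : Type} [Fintype κ] (x y : κ → U),
    comul u - ∑ j, x j ⊗ₜ[k] y j ∈ relA k A U s t U U →
      ∑ j, s (counit (x j)) * y j = u
  /-- right counitality: `t (ε u₍₂₎) u₍₁₎ = u` -/
  counit_comul_right : ∀ (u : U) {κ : Type} [Fintype κ] (x y : κ → U),
    comul u - ∑ j, x j ⊗ₜ[k] y j ∈ relA k A U s t U U →
      ∑ j, t (counit (y j)) * x j = u
  /-- coassociativity: `u₍₁₎₍₁₎ ⊗ u₍₁₎₍₂₎ ⊗ u₍₂₎ = u₍₁₎ ⊗ u₍₂₎₍₁₎ ⊗ u₍₂₎₍₂₎` -/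
  coassoc : ∀ (u : U) {κ : Type} [Fintype κ] (x y : κ → U)
      {κ' : Type} [Fintype κ'] (x₁ y₁ : κ → κ' → U) (x₂ y₂ : κ → κ' → U),
    comul u - ∑ j, x j ⊗ₜ[k] y j ∈ relA k A U s t U U →
    (∀ j, comul (x j) - ∑ l, x₁ j l ⊗ₜ[k] y₁ j l ∈ relA k A U s t U U) →
    (∀ j, comul (y j) - ∑ l, x₂ j l ⊗ₜ[k] y₂ j l ∈ relA k A U s t U U) →
    (∑ j, ∑ l, x₁ j l ⊗ₜ[k] (y₁ j l ⊗ₜ[k] y j)) -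
      (∑ j, ∑ l, x j ⊗ₜ[k] (x₂ j l ⊗ₜ[k] y₂ j l)) ∈ rel3 k A U s t

/-- A left Hopf structure on a left bialgebroid: the translation map
`u ↦ u₊ ⊗ u₋` (a set-theoretic lift of `α_ℓ⁻¹(u ⊗ 1)`), linear modulo the
`⊗_{Aᵒᵖ}`-relations and satisfying the two identities characterizing the
inverse of the Hopf-Galois map `α_ℓ : u ⊗ v ↦ u₍₁₎ ⊗ u₍₂₎v`, namely
`u₊₍₁₎ ⊗ u₊₍₂₎ u₋ = u ⊗ 1` in `U ⊗_A U` and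
`u₍₁₎₊ ⊗ u₍₁₎₋ u₍₂₎ = u ⊗ 1` in `U ⊗_{Aᵒᵖ} U`; this data is equivalent to the
bijectivity of `α_ℓ`, i.e. to `(U, A)` being a left Hopf algebroid. -/
structure LeftHopf (lb : LeftBialgebroid k A U) : Type where
  pinv : U → U ⊗[k] U
  pinv_add : ∀ u v : U, pinv (u + v) - pinv u - pinv v ∈ relOp k A U lb.t
  pinv_ksmul : ∀ (c : k) (u : U), pinv (c • u) - c • pinv u ∈ relOp k A U lb.t
  sch2 : ∀ (u : U) {κ : Type} [Fintype κ] (x y : κ → U)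
      {κ' : Type} [Fintype κ'] (p q : κ → κ' → U),
    pinv u - ∑ j, x j ⊗ₜ[k] y j ∈ relOp k A U lb.t →
    (∀ j, lb.comul (x j) - ∑ l, p j l ⊗ₜ[k] q j l ∈ relA k A U lb.s lb.t U U) →
    (∑ j, ∑ l, p j l ⊗ₜ[k] (q j l * y j)) - u ⊗ₜ[k] (1 : U)
      ∈ relA k A U lb.s lb.t U U
  sch3 : ∀ (u : U) {κ : Type} [Fintype κ] (x y : κ → U)
      {κ' : Type} [Fintype κ'] (p q : κ → κ' → U),
    lb.comul u - ∑ j, x j ⊗ₜ[k] y j ∈ relA k A U lb.s lb.t U U →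
    (∀ j, pinv (x j) - ∑ l, p j l ⊗ₜ[k] q j l ∈ relOp k A U lb.t) →
    (∑ j, ∑ l, p j l ⊗ₜ[k] (q j l * y j)) - u ⊗ₜ[k] (1 : U)
      ∈ relOp k A U lb.t

variable {k A U}

/-- the `k`-linear map `u ↦ u • n` for a fixed element of a `U`-module -/
def actOn (N : Type) [AddCommGroup N] [Module k N] [Module U N]
    [IsScalarTower k U N] (n : N) : U →ₗ[k] N where
  toFun u := u • n
  map_add' u v := add_smul u v n
  map_smul' c u := smul_assoc c u n

/-- A `k`-linear map `g : N →ₗ[k] M` between left `U`-modules is right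
`A`-linear (for the right `A`-actions `n ◃ a = t a • n`). -/
def RightALin (lb : LeftBialgebroid k A U) {N M : Type}
    [AddCommGroup N] [Module k N] [Module U N]
    [AddCommGroup M] [Module k M] [Module U M]
    (g : N →ₗ[k] M) : Prop :=
  ∀ (a : A) (n : N), g (lb.t a • n) = lb.t a • g n

/-- `f` descends to `N ⊗_A P`. -/
def IsBalanced (lb : LeftBialgebroid k A U) {N P M : Type}
    [AddCommGroup N] [Module k N] [Module U N]
    [AddCommGroup P] [Module k P] [Module U P]
    [AddCommGroup M] [Module k M]
    (f : N ⊗[k] P →ₗ[k] M) : Prop :=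
  relA k A U lb.s lb.t N P ≤ LinearMap.ker f

/-- `f : N ⊗[k] P →ₗ[k] M` is equivariant for the diagonal (comultiplication)
`U`-action `u • (n ⊗ p) = u₍₁₎ n ⊗ u₍₂₎ p` on `N ⊗_A P` and the given `U`-action
on `M`. -/
def DiagEquiv (lb : LeftBialgebroid k A U) {N P M : Type}
    [AddCommGroup N] [Module k N] [Module U N]
    [AddCommGroup P] [Module k P] [Module U P]
    [AddCommGroup M] [Module k M] [Module U M]
    (f : N ⊗[k] P →ₗ[k] M) : Prop :=
  ∀ (u : U) (n : N) (p : P) {κ : Type} [Fintype κ] (x y : κ → U),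
    lb.comul u - ∑ j, x j ⊗ₜ[k] y j ∈ relA k A U lb.s lb.t U U →
      f (∑ j, (x j • n) ⊗ₜ[k] (y j • p)) = u • f (n ⊗ₜ[k] p)

variable (k A U)

/-- An anti Yetter-Drinfel'd contramodule over a left Hopf algebroid `(U, A)`:
a left `U`-module `M` which is simultaneously a right `U`-contramodule (with
contraaction `γ : Hom_{Aᵒᵖ}(U, M) → M`, defined on the right `A`-linear maps
`U → M`), such that the two induced `A`-bimodule structures coincide and
`u (γ(f)) = γ(u₊₍₂₎ f(u₋ · − · u₊₍₁₎))` holds. -/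
structure AYDContra (lb : LeftBialgebroid k A U) (lh : LeftHopf k A U lb)
    (M : Type) [AddCommGroup M] [Module k M] [Module U M] [IsScalarTower k U M] :
    Type 1 where
  /-- the contraaction, defined on right `A`-linear maps `U → M` -/
  γ : ∀ f : U →ₗ[k] M, RightALin lb f → M
  γ_add : ∀ (f g : U →ₗ[k] M) (hf : RightALin lb f) (hg : RightALin lb g)
    (hfg : RightALin lb (f + g)), γ (f + g) hfg = γ f hf + γ g hg
  γ_ksmul : ∀ (c : k) (f : U →ₗ[k] M) (hf : RightALin lb f)
    (hcf : RightALin lb (c • f)), γ (c • f) hcf = c • γ f hf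
  /-- right `A`-linearity of the contraaction: `γ(f(a ▹ −)) = γ(f) ◃ a` -/
  γ_ralin : ∀ (a : A) (f : U →ₗ[k] M) (hf : RightALin lb f)
    (h' : RightALin lb (f ∘ₗ LinearMap.mulLeft k (lb.s a))),
    γ (f ∘ₗ LinearMap.mulLeft k (lb.s a)) h' = lb.t a • γ f hf
  /-- contraassociativity: `γ̇(γ̈(g(· ⊗ ··))) = γ(g(−₍₁₎ ⊗ −₍₂₎))` -/
  γ_assoc : ∀ (g : U ⊗[k] U →ₗ[k] M),
    relA k A U lb.s lb.t U U ≤ LinearMap.ker g →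
    (∀ (a : A) (u v : U), g (u ⊗ₜ[k] (lb.t a * v)) = lb.t a • g (u ⊗ₜ[k] v)) →
    ∀ (h₁ h₂ : U →ₗ[k] M) (hh₁ : RightALin lb h₁) (hh₂ : RightALin lb h₂),
    (∀ u : U, ∀ hu : RightALin lb (g ∘ₗ TensorProduct.mk k U U u),
      h₁ u = γ (g ∘ₗ TensorProduct.mk k U U u) hu) →
    (∀ u : U, h₂ u = g (lb.comul u)) →
    γ h₁ hh₁ = γ h₂ hh₂
  /-- contraunitality: `γ(m ε(−)) = m` -/
  γ_counit : ∀ (m : M)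
    (h : RightALin lb ((actOn M m) ∘ₗ (lb.t ∘ₗ lb.counit))),
    γ ((actOn M m) ∘ₗ (lb.t ∘ₗ lb.counit)) h = m
  /-- the induced left `A`-action of the contramodule coincides with the one
  coming from the `U`-action via the source map \eqref{romaedintorni} -/
  bimod : ∀ (a : A) (m : M)
    (h : RightALin lb
      ((actOn M m) ∘ₗ (lb.t ∘ₗ (lb.counit ∘ₗ LinearMap.mulRight k (lb.s a))))),
    γ ((actOn M m) ∘ₗ (lb.t ∘ₗ (lb.counit ∘ₗ LinearMap.mulRight k (lb.s a)))) h =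
      lb.s a • m
  /-- the anti Yetter-Drinfel'd compatibility \eqref{nawas1}:
  `u (γ(f)) = γ(u₊₍₂₎ f(u₋ · − · u₊₍₁₎))` -/
  ayd : ∀ (u : U) (f : U →ₗ[k] M) (hf : RightALin lb f)
    {κ : Type} [Fintype κ] (x y : κ → U)
    {κ' : Type} [Fintype κ'] (p q : κ → κ' → U),
    lh.pinv u - ∑ j, x j ⊗ₜ[k] y j ∈ relOp k A U lb.t →
    (∀ j, lb.comul (x j) - ∑ l, p j l ⊗ₜ[k] q j l ∈ relA k A U lb.s lb.t U U) →
    ∀ (h : U →ₗ[k] M) (hh : RightALin lb h),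
    (∀ v : U, h v = ∑ j, ∑ l, q j l • f (y j * v * p j l)) →
    u • γ f hf = γ h hh

variable {k A U}

/-- Stability of an anti Yetter-Drinfel'd contramodule: `γ(− m) = m`. -/
def AYDContra.Stable {lb : LeftBialgebroid k A U} {lh : LeftHopf k A U lb}
    {M : Type} [AddCommGroup M] [Module k M] [Module U M] [IsScalarTower k U M]
    (C : AYDContra k A U lb lh M) : Prop :=
  ∀ (m : M) (h : RightALin lb (actOn (U := U) M m)), C.γ (actOn (U := U) M m) h = m

variable (k A U)

/-- A cochain in `C^q(U,M) = Hom_{Aᵒᵖ}(U^{⊗_{Aᵒᵖ} q}, M)`, presented as a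
function on tuples: `k`-multilinear, `⊗_{Aᵒᵖ}`-balanced between consecutive
slots, and right `A`-linear. -/
def IsCochain (lb : LeftBialgebroid k A U)
    (M : Type) [AddCommGroup M] [Module k M] [Module U M]
    (q : ℕ) (f : (Fin q → U) → M) : Prop :=
  (∀ (u : Fin q → U) (i : Fin q) (v v' : U),
    f (Function.update u i (v + v')) =
      f (Function.update u i v) + f (Function.update u i v')) ∧
  (∀ (u : Fin q → U) (i : Fin q) (c : k) (v : U),
    f (Function.update u i (c • v)) = c • f (Function.update u i v)) ∧
  (∀ (u : Fin q → U) (i : Fin (q - 1)) (a : A),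
    ∀ (j j' : Fin q), (j : ℕ) = i → (j' : ℕ) = i + 1 →
    f (Function.update u j (u j * lb.t a)) =
      f (Function.update u j' (lb.t a * u j'))) ∧
  (∀ (u : Fin q → U) (a : A) (j : Fin q), (j : ℕ) = 0 →
    f (Function.update u j (lb.t a * u j)) = lb.t a • f u)

variable {k A U}

section Aux

variable (lb : LeftBialgebroid k A U)

lemma relA_mul_right {z : U ⊗[k] U} (hz : z ∈ relA k A U lb.s lb.t U U) (w : U ⊗[k] U) :
    z * w ∈ relA k A U lb.s lb.t U U := by
  induction hz using Submodule.span_induction with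
  | mem x hx =>
    obtain ⟨a, nn, m, rfl⟩ := hx
    induction w using TensorProduct.induction_on with
    | zero => simpa using Submodule.zero_mem _
    | tmul p q =>
      rw [sub_mul]
      apply Submodule.subset_span
      refine ⟨a, nn * p, m * q, ?_⟩
      simp only [smul_eq_mul, Algebra.TensorProduct.tmul_mul_tmul, mul_assoc]
    | add w₁ w₂ h1 h2 =>
      rw [mul_add]; exact Submodule.add_mem _ h1 h2
  | zero => simpa using Submodule.zero_mem _
  | add x y _ _ hx hy => rw [add_mul]; exact Submodule.add_mem _ hx hy
  | smul c x _ hx => rw [smul_mul_assoc]; exact Submodule.smul_mem _ c hx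

lemma relA_lmul_t (a : A) {z : U ⊗[k] U} (hz : z ∈ relA k A U lb.s lb.t U U) :
    ((1 : U) ⊗ₜ[k] lb.t a) * z ∈ relA k A U lb.s lb.t U U := by
  induction hz using Submodule.span_induction with
  | mem x hx =>
    obtain ⟨b, nn, m, rfl⟩ := hx
    rw [mul_sub]
    apply Submodule.subset_span
    refine ⟨b, nn, lb.t a * m, ?_⟩
    simp only [smul_eq_mul, Algebra.TensorProduct.tmul_mul_tmul, one_mul]
    rw [← mul_assoc (lb.t a) (lb.s b) m, ← lb.st_comm b a, mul_assoc]
  | zero => simpa using Submodule.zero_mem _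
  | add x y _ _ hx hy => rw [mul_add]; exact Submodule.add_mem _ hx hy
  | smul c x _ hx => rw [mul_smul_comm]; exact Submodule.smul_mem _ c hx

lemma relOp_mul_right {z : U ⊗[k] U} (hz : z ∈ relOp k A U lb.t) (y : U) :
    z * ((1 : U) ⊗ₜ[k] y) ∈ relOp k A U lb.t := by
  induction hz using Submodule.span_induction with
  | mem x hx =>
    obtain ⟨a, p, q, rfl⟩ := hx
    rw [sub_mul]
    apply Submodule.subset_span
    exact ⟨a, p, q * y, by simp [Algebra.TensorProduct.tmul_mul_tmul, mul_assoc]⟩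
  | zero => simpa using Submodule.zero_mem _
  | add x y' _ _ hx hy => rw [add_mul]; exact Submodule.add_mem _ hx hy
  | smul c x _ hx => rw [smul_mul_assoc]; exact Submodule.smul_mem _ c hx

lemma relOp_lmul_t (a : A) {z : U ⊗[k] U} (hz : z ∈ relOp k A U lb.t) :
    (lb.t a ⊗ₜ[k] (1 : U)) * z ∈ relOp k A U lb.t := by
  induction hz using Submodule.span_induction with
  | mem x hx =>
    obtain ⟨b, p, q, rfl⟩ := hx
    rw [mul_sub]
    apply Submodule.subset_span
    exact ⟨b, lb.t a * p, q, by simp [Algebra.TensorProduct.tmul_mul_tmul, mul_assoc]⟩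
  | zero => simpa using Submodule.zero_mem _
  | add x y' _ _ hx hy => rw [mul_add]; exact Submodule.add_mem _ hx hy
  | smul c x _ hx => rw [mul_smul_comm]; exact Submodule.smul_mem _ c hx

lemma comul_t_mul (a : A) (x : U) :
    lb.comul (lb.t a * x) - ((1 : U) ⊗ₜ[k] lb.t a) * lb.comul x
      ∈ relA k A U lb.s lb.t U U := by
  have h1 := lb.comul_mul (lb.t a) x
  have h2 : (lb.comul (lb.t a) - (1 : U) ⊗ₜ[k] lb.t a) * lb.comul x
      ∈ relA k A U lb.s lb.t U U := relA_mul_right lb (lb.comul_t a) _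
  have : lb.comul (lb.t a * x) - ((1 : U) ⊗ₜ[k] lb.t a) * lb.comul x =
      (lb.comul (lb.t a * x) - lb.comul (lb.t a) * lb.comul x) +
      (lb.comul (lb.t a) - (1 : U) ⊗ₜ[k] lb.t a) * lb.comul x := by
    rw [sub_mul, ← sub_add_sub_cancel (lb.comul (lb.t a * x))
      (lb.comul (lb.t a) * lb.comul x) (((1 : U) ⊗ₜ[k] lb.t a) * lb.comul x)]
  rw [this]
  exact Submodule.add_mem _ h1 h2

lemma exists_fin_rep (z : U ⊗[k] U) :
    ∃ (N : ℕ) (x y : Fin N → U), z = ∑ j, x j ⊗ₜ[k] y j := by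
  induction z using TensorProduct.induction_on with
  | zero => exact ⟨0, ![], ![], by simp⟩
  | tmul p q => exact ⟨1, ![p], ![q], by simp⟩
  | add z₁ z₂ h1 h2 =>
    obtain ⟨N₁, x₁, y₁, rfl⟩ := h1
    obtain ⟨N₂, x₂, y₂, rfl⟩ := h2
    refine ⟨N₁ + N₂, Fin.append x₁ x₂, Fin.append y₁ y₂, ?_⟩
    rw [Fin.sum_univ_add]
    simp [Fin.append_left, Fin.append_right]

lemma exists_fin_rep_family {N : ℕ} (z : Fin N → U ⊗[k] U) :
    ∃ (L : ℕ) (p q : Fin N → Fin L → U), ∀ j, z j = ∑ l, p j l ⊗ₜ[k] q j l := by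
  choose L x y hxy using fun j => exists_fin_rep (z j)
  classical
  refine ⟨Finset.univ.sup L, fun j l => if h : (l : ℕ) < L j then x j ⟨l, h⟩ else 0,
    fun j l => if h : (l : ℕ) < L j then y j ⟨l, h⟩ else 0, fun j => ?_⟩
  rw [hxy j]
  have hle : L j ≤ Finset.univ.sup L := Finset.le_sup (Finset.mem_univ j)
  have step1 : ∀ l : Fin (Finset.univ.sup L),
      (if h : (l : ℕ) < L j then x j ⟨l, h⟩ else 0) ⊗ₜ[k]
        (if h : (l : ℕ) < L j then y j ⟨l, h⟩ else 0) =
      (fun i => if h : i < L j then x j ⟨i, h⟩ ⊗ₜ[k] y j ⟨i, h⟩ else 0) (l : ℕ) := by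
    intro l
    by_cases h : (l : ℕ) < L j
    · simp [h]
    · simp [h]
  calc ∑ l : Fin (L j), x j l ⊗ₜ[k] y j l
      = ∑ i ∈ Finset.range (L j),
          (fun i => if h : i < L j then x j ⟨i, h⟩ ⊗ₜ[k] y j ⟨i, h⟩ else 0) i := by
        rw [← Fin.sum_univ_eq_sum_range]
        exact Finset.sum_congr rfl fun l _ => by simp [l.isLt]
    _ = ∑ i ∈ Finset.range (Finset.univ.sup L),
          (fun i => if h : i < L j then x j ⟨i, h⟩ ⊗ₜ[k] y j ⟨i, h⟩ else 0) i := by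
        refine Finset.sum_subset (Finset.range_subset_range.mpr hle) fun i _ hi => ?_
        exact dif_neg (by simpa using hi)
    _ = ∑ l : Fin (Finset.univ.sup L), _ := (Fin.sum_univ_eq_sum_range _ _).symm
    _ = _ := by exact Finset.sum_congr rfl fun l _ => (step1 l).symm


variable (lh : LeftHopf k A U lb)

/-- The map `β̂ : U ⊗[k] U →ₗ (U ⊗[k] U)/relOp`, `x ⊗ y ↦ [pinv x * (1 ⊗ y)]`. -/
def PsiMap : U ⊗[k] U →ₗ[k] (U ⊗[k] U) ⧸ relOp k A U lb.t :=
  TensorProduct.lift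
  { toFun := fun x =>
      { toFun := fun y =>
          (relOp k A U lb.t).mkQ (lh.pinv x * ((1 : U) ⊗ₜ[k] y))
        map_add' := fun y y' => by
          rw [TensorProduct.tmul_add, mul_add, map_add]
        map_smul' := fun c y => by
          rw [TensorProduct.tmul_smul, mul_smul_comm, map_smul, RingHom.id_apply] }
    map_add' := fun x x' => by
      ext y
      simp only [LinearMap.coe_mk, AddHom.coe_mk, LinearMap.add_apply]
      rw [← map_add, Submodule.mkQ_apply, Submodule.mkQ_apply, Submodule.Quotient.eq]
      have : lh.pinv (x + x') * ((1 : U) ⊗ₜ[k] y) -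
          (lh.pinv x * ((1 : U) ⊗ₜ[k] y) + lh.pinv x' * ((1 : U) ⊗ₜ[k] y)) =
          (lh.pinv (x + x') - lh.pinv x - lh.pinv x') * ((1 : U) ⊗ₜ[k] y) := by
        rw [sub_mul, sub_mul]; abel
      rw [this]
      exact relOp_mul_right lb (lh.pinv_add x x') y
    map_smul' := fun c x => by
      ext y
      simp only [LinearMap.coe_mk, AddHom.coe_mk, RingHom.id_apply, LinearMap.smul_apply]
      rw [← map_smul, Submodule.mkQ_apply, Submodule.mkQ_apply, Submodule.Quotient.eq]
      have : lh.pinv (c • x) * ((1 : U) ⊗ₜ[k] y) - c • (lh.pinv x * ((1 : U) ⊗ₜ[k] y)) =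
          (lh.pinv (c • x) - c • lh.pinv x) * ((1 : U) ⊗ₜ[k] y) := by
        rw [sub_mul, smul_mul_assoc]
      rw [this]
      exact relOp_mul_right lb (lh.pinv_ksmul c x) y }

lemma PsiMap_tmul (x y : U) :
    PsiMap lb lh (x ⊗ₜ[k] y) =
      Submodule.Quotient.mk (lh.pinv x * ((1 : U) ⊗ₜ[k] y)) := rfl

lemma PsiMap_comul_one_add {r : U ⊗[k] U} (hr : r ∈ relA k A U lb.s lb.t U U) :
    PsiMap lb lh (lb.comul 1 + r) =
      Submodule.Quotient.mk ((1 : U) ⊗ₜ[k] (1 : U)) := by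
  obtain ⟨N, x, y, hz⟩ := exists_fin_rep (lb.comul 1 + r)
  obtain ⟨L, p, q, hpq⟩ := exists_fin_rep_family (fun j => lh.pinv (x j))
  have s3 := lh.sch3 1 x y p q
    (by
      have he : lb.comul 1 - ∑ j, x j ⊗ₜ[k] y j = -r := by rw [← hz]; abel
      rw [he]; exact Submodule.neg_mem _ hr)
    (fun j => by rw [hpq j]; simpa using Submodule.zero_mem _)
  rw [hz, map_sum]
  have step : ∀ j, PsiMap lb lh (x j ⊗ₜ[k] y j) =
      Submodule.Quotient.mk (∑ l, p j l ⊗ₜ[k] (q j l * y j)) := by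
    intro j
    rw [PsiMap_tmul, hpq j, Finset.sum_mul]
    congr 1
    exact Finset.sum_congr rfl fun l _ => by
      rw [Algebra.TensorProduct.tmul_mul_tmul, mul_one]
  simp_rw [step, ← Submodule.mkQ_apply, ← map_sum, Submodule.mkQ_apply,
    Submodule.Quotient.eq]
  exact s3

lemma PsiMap_relA {r : U ⊗[k] U} (hr : r ∈ relA k A U lb.s lb.t U U) :
    PsiMap lb lh r = 0 := by
  have h1 := PsiMap_comul_one_add lb lh hr
  have h0 := PsiMap_comul_one_add lb lh (Submodule.zero_mem (relA k A U lb.s lb.t U U))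
  rw [add_zero] at h0
  rw [map_add, h0] at h1
  exact add_eq_left.mp h1

lemma PsiMap_comul_mul (x y : U) :
    PsiMap lb lh (lb.comul x * ((1 : U) ⊗ₜ[k] y)) =
      Submodule.Quotient.mk (x ⊗ₜ[k] y) := by
  obtain ⟨N, c, d, hc⟩ := exists_fin_rep (lb.comul x)
  obtain ⟨L, p, q, hpq⟩ := exists_fin_rep_family (fun j => lh.pinv (c j))
  have s3 := lh.sch3 x c d p q
    (by rw [hc]; simpa using Submodule.zero_mem _)
    (fun j => by rw [hpq j]; simpa using Submodule.zero_mem _)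
  have s3' := relOp_mul_right lb s3 y
  rw [sub_mul, Finset.sum_mul, Algebra.TensorProduct.tmul_mul_tmul, mul_one, one_mul] at s3'
  rw [hc, Finset.sum_mul, map_sum]
  have step : ∀ j, PsiMap lb lh ((c j ⊗ₜ[k] d j) * ((1:U) ⊗ₜ[k] y)) =
      Submodule.Quotient.mk (∑ l, p j l ⊗ₜ[k] (q j l * (d j * y))) := by
    intro j
    rw [Algebra.TensorProduct.tmul_mul_tmul, mul_one, PsiMap_tmul, hpq j, Finset.sum_mul]
    congr 1
    exact Finset.sum_congr rfl fun l _ => by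
      rw [Algebra.TensorProduct.tmul_mul_tmul, mul_one]
  simp_rw [step, ← Submodule.mkQ_apply, ← map_sum, Submodule.mkQ_apply,
    Submodule.Quotient.eq]
  have : ∀ j, (∑ l, p j l ⊗ₜ[k] (q j l * d j)) * ((1:U) ⊗ₜ[k] y) =
      ∑ l, p j l ⊗ₜ[k] (q j l * (d j * y)) := by
    intro j
    rw [Finset.sum_mul]
    exact Finset.sum_congr rfl fun l _ => by
      rw [Algebra.TensorProduct.tmul_mul_tmul, mul_one, mul_assoc]
  simp_rw [this] at s3'
  exact s3'


lemma key_tensor (v : U) (a : A) :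
    lh.pinv v * ((1 : U) ⊗ₜ[k] lb.t a) - (lb.t a ⊗ₜ[k] (1 : U)) * lh.pinv v
      ∈ relOp k A U lb.t := by
  obtain ⟨N, x, y, hv⟩ := exists_fin_rep (lh.pinv v)
  obtain ⟨L, p, q, hpq⟩ := exists_fin_rep_family (fun j => lb.comul (x j))
  have s2 := lh.sch2 v x y p q
    (by rw [hv]; simpa using Submodule.zero_mem _)
    (fun j => by rw [hpq j]; simpa using Submodule.zero_mem _)
  -- `C = ∑ⱼ Δ(xⱼ)(1 ⊗ yⱼ)` represents `v ⊗ 1` modulo `relA`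
  set C : U ⊗[k] U := ∑ j, lb.comul (x j) * ((1:U) ⊗ₜ[k] y j) with hCdef
  have hC : C - v ⊗ₜ[k] (1 : U) ∈ relA k A U lb.s lb.t U U := by
    have : C = ∑ j, ∑ l, p j l ⊗ₜ[k] (q j l * y j) := by
      refine Finset.sum_congr rfl fun j _ => ?_
      rw [hpq j, Finset.sum_mul]
      exact Finset.sum_congr rfl fun l _ => by
        rw [Algebra.TensorProduct.tmul_mul_tmul, mul_one]
    rw [this]
    exact s2
  rw [← Submodule.Quotient.eq]
  have side1 : (Submodule.Quotient.mk (lh.pinv v * ((1 : U) ⊗ₜ[k] lb.t a)) :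
      U ⊗[k] U ⧸ relOp k A U lb.t) = PsiMap lb lh (v ⊗ₜ[k] lb.t a) := by
    have e1 : lh.pinv v * ((1 : U) ⊗ₜ[k] lb.t a) = ∑ j, x j ⊗ₜ[k] (y j * lb.t a) := by
      rw [hv, Finset.sum_mul]
      exact Finset.sum_congr rfl fun j _ => by
        rw [Algebra.TensorProduct.tmul_mul_tmul, mul_one]
    have e2 : ∀ j : Fin N, (Submodule.Quotient.mk (x j ⊗ₜ[k] (y j * lb.t a)) :
        U ⊗[k] U ⧸ relOp k A U lb.t) =
        PsiMap lb lh (lb.comul (x j) * ((1:U) ⊗ₜ[k] (y j * lb.t a))) :=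
      fun j => (PsiMap_comul_mul lb lh (x j) (y j * lb.t a)).symm
    rw [e1, ← Submodule.mkQ_apply, map_sum]
    simp_rw [Submodule.mkQ_apply, e2, ← map_sum]
    have e3 : ∑ j, lb.comul (x j) * ((1:U) ⊗ₜ[k] (y j * lb.t a)) =
        C * ((1:U) ⊗ₜ[k] lb.t a) := by
      rw [hCdef, Finset.sum_mul]
      exact Finset.sum_congr rfl fun j _ => by
        rw [mul_assoc, Algebra.TensorProduct.tmul_mul_tmul, one_mul]
    rw [e3]
    have h4 : C * ((1:U) ⊗ₜ[k] lb.t a) - v ⊗ₜ[k] lb.t a ∈ relA k A U lb.s lb.t U U := by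
      have := relA_mul_right lb hC ((1:U) ⊗ₜ[k] lb.t a)
      rw [sub_mul, Algebra.TensorProduct.tmul_mul_tmul, mul_one, one_mul] at this
      exact this
    have := PsiMap_relA lb lh h4
    rw [map_sub] at this
    exact sub_eq_zero.mp this
  have side2 : (Submodule.Quotient.mk ((lb.t a ⊗ₜ[k] (1 : U)) * lh.pinv v) :
      U ⊗[k] U ⧸ relOp k A U lb.t) = PsiMap lb lh (v ⊗ₜ[k] lb.t a) := by
    have e1 : (lb.t a ⊗ₜ[k] (1 : U)) * lh.pinv v = ∑ j, (lb.t a * x j) ⊗ₜ[k] y j := by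
      rw [hv, Finset.mul_sum]
      exact Finset.sum_congr rfl fun j _ => by
        rw [Algebra.TensorProduct.tmul_mul_tmul, one_mul]
    have e2 : ∀ j : Fin N, (Submodule.Quotient.mk ((lb.t a * x j) ⊗ₜ[k] y j) :
        U ⊗[k] U ⧸ relOp k A U lb.t) =
        PsiMap lb lh (lb.comul (lb.t a * x j) * ((1:U) ⊗ₜ[k] y j)) :=
      fun j => (PsiMap_comul_mul lb lh (lb.t a * x j) (y j)).symm
    rw [e1, ← Submodule.mkQ_apply, map_sum]
    simp_rw [Submodule.mkQ_apply, e2, ← map_sum]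
    have h4 : (∑ j, lb.comul (lb.t a * x j) * ((1:U) ⊗ₜ[k] y j)) - v ⊗ₜ[k] lb.t a
        ∈ relA k A U lb.s lb.t U U := by
      have m1 : (∑ j, lb.comul (lb.t a * x j) * ((1:U) ⊗ₜ[k] y j)) -
          ((1:U) ⊗ₜ[k] lb.t a) * C ∈ relA k A U lb.s lb.t U U := by
        rw [hCdef, Finset.mul_sum, ← Finset.sum_sub_distrib]
        refine Submodule.sum_mem _ fun j _ => ?_
        have := relA_mul_right lb (comul_t_mul lb a (x j)) ((1:U) ⊗ₜ[k] y j)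
        rw [sub_mul, mul_assoc] at this
        exact this
      have m2 : ((1:U) ⊗ₜ[k] lb.t a) * C - v ⊗ₜ[k] lb.t a
          ∈ relA k A U lb.s lb.t U U := by
        have := relA_lmul_t lb a hC
        rw [mul_sub, Algebra.TensorProduct.tmul_mul_tmul, mul_one, one_mul] at this
        exact this
      have := Submodule.add_mem _ m1 m2
      rw [sub_add_sub_cancel] at this
      exact this
    have := PsiMap_relA lb lh h4
    rw [map_sub] at this
    exact (sub_eq_zero.mp this)
  rw [side1, side2]

lemma key_scalar {M : Type} [AddCommGroup M] [Module k M]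
    (Φ : U →ₗ[k] U →ₗ[k] M)
    (hΦ : ∀ (b : A) (x y : U), Φ (x * lb.t b) y = Φ x (lb.t b * y))
    (v : U) {κ : Type} [Fintype κ] (x y : κ → U)
    (hxy : lh.pinv v - ∑ j, x j ⊗ₜ[k] y j ∈ relOp k A U lb.t) (a : A) :
    ∑ j, Φ (x j) (y j * lb.t a) = ∑ j, Φ (lb.t a * x j) (y j) := by
  have hker : ∀ z ∈ relOp k A U lb.t, TensorProduct.lift Φ z = 0 := by
    intro z hz
    refine Submodule.span_induction ?_ (map_zero _) (fun a b _ _ ha hb => by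
      rw [map_add, ha, hb, add_zero]) (fun c a _ ha => by
      rw [map_smul, ha, smul_zero]) hz
    rintro z ⟨b, p, q, rfl⟩
    rw [map_sub, TensorProduct.lift.tmul, TensorProduct.lift.tmul, hΦ, sub_self]
  have hE : (∑ j, x j ⊗ₜ[k] (y j * lb.t a)) - ∑ j, (lb.t a * x j) ⊗ₜ[k] y j
      ∈ relOp k A U lb.t := by
    have h1 := key_tensor lb lh v a
    have h2 := relOp_mul_right lb hxy (lb.t a)
    have h3 := relOp_lmul_t lb a hxy
    rw [sub_mul, Finset.sum_mul] at h2
    rw [mul_sub, Finset.mul_sum] at h3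
    simp_rw [Algebra.TensorProduct.tmul_mul_tmul, mul_one, one_mul] at h2 h3
    have hcomb := Submodule.add_mem _ (Submodule.sub_mem _ h1 h2) h3
    have heq : (lh.pinv v * ((1:U) ⊗ₜ[k] lb.t a) - (lb.t a ⊗ₜ[k] (1:U)) * lh.pinv v) -
        (lh.pinv v * ((1:U) ⊗ₜ[k] lb.t a) - ∑ j, x j ⊗ₜ[k] (y j * lb.t a)) +
        ((lb.t a ⊗ₜ[k] (1:U)) * lh.pinv v - ∑ j, (lb.t a * x j) ⊗ₜ[k] y j) =
        (∑ j, x j ⊗ₜ[k] (y j * lb.t a)) - ∑ j, (lb.t a * x j) ⊗ₜ[k] y j := by abel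
    rw [heq] at hcomb
    exact hcomb
  have := hker _ hE
  rw [map_sub, map_sum, map_sum] at this
  simp_rw [TensorProduct.lift.tmul] at this
  exact sub_eq_zero.mp this


section Gamma

variable {M : Type} [AddCommGroup M] [Module k M] [Module U M] [IsScalarTower k U M]

lemma rightALin_zero : RightALin lb (0 : U →ₗ[k] M) := fun a nn => by simp

lemma rightALin_sum {ι : Type} (S : Finset ι) (F : ι → (U →ₗ[k] M))
    (hF : ∀ i ∈ S, RightALin lb (F i)) : RightALin lb (∑ i ∈ S, F i) := by
  intro a nn
  rw [LinearMap.sum_apply, LinearMap.sum_apply, Finset.smul_sum]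
  exact Finset.sum_congr rfl fun i hi => hF i hi a nn

lemma gamma_congr (C : AYDContra k A U lb lh M) {f g : U →ₗ[k] M}
    (hf : RightALin lb f) (hg : RightALin lb g) (e : f = g) :
    C.γ f hf = C.γ g hg := by subst e; rfl

lemma gamma_zero (C : AYDContra k A U lb lh M) (h0 : RightALin lb (0 : U →ₗ[k] M)) :
    C.γ 0 h0 = 0 := by
  have hc : RightALin lb ((0 : k) • (0 : U →ₗ[k] M)) := by
    rw [zero_smul]; exact h0
  calc C.γ 0 h0 = C.γ ((0 : k) • (0 : U →ₗ[k] M)) hc :=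
        gamma_congr lb lh C h0 hc (zero_smul k (0 : U →ₗ[k] M)).symm
    _ = (0 : k) • C.γ 0 h0 := C.γ_ksmul (0 : k) 0 h0 hc
    _ = 0 := zero_smul k _

lemma gamma_sum (C : AYDContra k A U lb lh M) {ι : Type} [DecidableEq ι]
    (S : Finset ι) (F : ι → (U →ₗ[k] M)) (hF : ∀ i, RightALin lb (F i))
    (hs : RightALin lb (∑ i ∈ S, F i)) :
    C.γ (∑ i ∈ S, F i) hs = ∑ i ∈ S, C.γ (F i) (hF i) := by
  induction S using Finset.induction_on with
  | empty =>
    exact (gamma_congr lb lh C hs (rightALin_zero lb) Finset.sum_empty).trans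
      ((gamma_zero lb lh C _).trans Finset.sum_empty.symm)
  | @insert a s ha ih =>
    have hsum : RightALin lb (∑ i ∈ s, F i) :=
      rightALin_sum lb s F fun i _ => hF i
    have hins : RightALin lb (F a + ∑ i ∈ s, F i) := by
      intro b nn
      rw [LinearMap.add_apply, LinearMap.add_apply, hF a b nn, hsum b nn, smul_add]
    calc C.γ (∑ i ∈ insert a s, F i) hs
        = C.γ (F a + ∑ i ∈ s, F i) hins :=
          gamma_congr lb lh C hs hins (Finset.sum_insert ha)
      _ = C.γ (F a) (hF a) + C.γ (∑ i ∈ s, F i) hsum :=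
          C.γ_add (F a) (∑ i ∈ s, F i) (hF a) hsum hins
      _ = C.γ (F a) (hF a) + ∑ i ∈ s, C.γ (F i) (hF i) := by rw [ih hsum]
      _ = ∑ i ∈ insert a s, C.γ (F i) (hF i) := by rw [Finset.sum_insert ha]

end Gamma

section Cochain

variable {n : ℕ} {M : Type} [AddCommGroup M] [Module k M] [Module U M]
  [IsScalarTower k U M]
  {f : (Fin (n + 1) → U) → M}

lemma f0_add (hf : IsCochain k A U lb M (n + 1) f) (cs : Fin n → U) (x x' : U) :
    f (Fin.cons (x + x') cs) = f (Fin.cons x cs) + f (Fin.cons x' cs) := by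
  have := hf.1 (Fin.cons x cs) 0 x x'
  rwa [Fin.update_cons_zero, Fin.update_cons_zero, Fin.update_cons_zero] at this

lemma f0_smul (hf : IsCochain k A U lb M (n + 1) f) (cs : Fin n → U) (c : k) (x : U) :
    f (Fin.cons (c • x) cs) = c • f (Fin.cons x cs) := by
  have := hf.2.1 (Fin.cons x cs) 0 c x
  rwa [Fin.update_cons_zero, Fin.update_cons_zero] at this

lemma f0_t (hf : IsCochain k A U lb M (n + 1) f) (cs : Fin n → U) (a : A) (x : U) :
    f (Fin.cons (lb.t a * x) cs) = lb.t a • f (Fin.cons x cs) := by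
  have := hf.2.2.2 (Fin.cons x cs) a 0 rfl
  rwa [Fin.cons_zero, Fin.update_cons_zero] at this

lemma f_zero_slot (hf : IsCochain k A U lb M (n + 1) f) (τ : Fin (n + 1) → U) (i : Fin (n + 1)) (hτ : τ i = 0) :
    f τ = 0 := by
  have h1 := hf.2.1 τ i (0 : k) 0
  rw [zero_smul, zero_smul, ← hτ, Function.update_eq_self] at h1
  exact h1

/-- The bilinear pairing `(x, z) ↦ x • f (z, cs)`. -/
def phi2 (hf : IsCochain k A U lb M (n + 1) f) (cs : Fin n → U) : U →ₗ[k] U →ₗ[k] M :=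
  LinearMap.mk₂ k (fun x z => x • f (Fin.cons z cs))
    (fun x x' z => by rw [add_smul])
    (fun c x z => by rw [smul_assoc])
    (fun x z z' => by rw [f0_add lb hf cs, smul_add])
    (fun c x z => by rw [f0_smul lb hf cs, smul_comm])

lemma phi2_apply (hf : IsCochain k A U lb M (n + 1) f) (cs : Fin n → U) (x z : U) :
    phi2 lb hf cs x z = x • f (Fin.cons z cs) := rfl

variable {κ' : Type} [Fintype κ']

/-- `w ↦ ∑ₗ eₗ • f (g'ₗ * w, cs)`. -/
def Hm (hf : IsCochain k A U lb M (n + 1) f) (cs : Fin n → U) (e g' : κ' → U) : U →ₗ[k] M :=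
  ∑ l, (phi2 lb hf cs (e l)).comp (LinearMap.mulLeft k (g' l))

lemma Hm_apply (hf : IsCochain k A U lb M (n + 1) f) (cs : Fin n → U) (e g' : κ' → U) (w : U) :
    Hm lb hf cs e g' w = ∑ l, e l • f (Fin.cons (g' l * w) cs) := by
  rw [Hm, LinearMap.sum_apply]
  rfl

lemma Hm_rightALin (hf : IsCochain k A U lb M (n + 1) f) (cs : Fin n → U) (e g' : κ' → U) (V : U)
    (hV : lh.pinv V - ∑ l, e l ⊗ₜ[k] g' l ∈ relOp k A U lb.t) :
    RightALin lb (Hm lb hf cs e g') := by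
  intro a w
  rw [Hm_apply, Hm_apply, smul_eq_mul, Finset.smul_sum]
  have hΦ : ∀ (b : A) (x y : U),
      ((phi2 lb hf cs).compl₂ (LinearMap.mulRight k w)) (x * lb.t b) y =
      ((phi2 lb hf cs).compl₂ (LinearMap.mulRight k w)) x (lb.t b * y) := by
    intro b x y
    rw [LinearMap.compl₂_apply, LinearMap.compl₂_apply, LinearMap.mulRight_apply,
      LinearMap.mulRight_apply, phi2_apply, phi2_apply, mul_smul,
      ← f0_t lb hf cs b (y * w), mul_assoc]
  have hkey := key_scalar lb lh ((phi2 lb hf cs).compl₂ (LinearMap.mulRight k w))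
    hΦ V e g' hV a
  simp only [LinearMap.compl₂_apply, LinearMap.mulRight_apply, phi2_apply] at hkey
  calc ∑ l, e l • f (Fin.cons (g' l * (lb.t a * w)) cs)
      = ∑ l, e l • f (Fin.cons (g' l * lb.t a * w) cs) := by
        simp_rw [mul_assoc]
    _ = ∑ l, (lb.t a * e l) • f (Fin.cons (g' l * w) cs) := hkey
    _ = ∑ l, lb.t a • e l • f (Fin.cons (g' l * w) cs) := by
        simp_rw [mul_smul]

end Cochain

end Aux

/-- let `(U, A)` be a left bialgebroid which is left Hopf and `M`
a stable anti Yetter-Drinfel'd contramodule over `U` with contraaction `γ`.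
For each `q = n+1`, consider the isomorphisms
`θ : Hom_U(U^{⊗_{Aᵒᵖ}(q+1)}, M) ≅ Hom_{Aᵒᵖ}(U^{⊗_{Aᵒᵖ} q}, M)`, `g ↦ g(1, ·)`
(with inverse `f ↦ (z ↦ z₀ • f(tail z))`),
`η : Hom_U(U ⊗_A U^{⊗_{Aᵒᵖ} q}, M) ≅ Hom_U(U^{⊗_{Aᵒᵖ}(q+1)}, M)`
(with inverse `η⁻¹(g)(v ⊗ (u¹,…)) = g(v₊, v₋u¹, u²,…)`), and
`χ : Hom_U(U^{⊗_{Aᵒᵖ} q} ⊗_A U, M) ≅ Hom_U(U^{⊗_{Aᵒᵖ}(q+1)}, M)`,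
`χ(f)(u¹,…,u^q,v) = f((u¹₍₁₎,…,u^q₍₁₎) ⊗ u¹₍₂₎⋯u^q₍₂₎v)`.
Then the composite `θ ∘ χ ∘ tr ∘ η⁻¹ ∘ θ⁻¹`, with
`tr : Hom_U(U ⊗_A U^{⊗_{Aᵒᵖ} q}, M) ≅ Hom_U(U^{⊗_{Aᵒᵖ} q} ⊗_A U, M)` the trace
isomorphism `(tr f)(p ⊗ n) = γ(f(n ⊗ − p))`, equals the cocyclic operator
`(τ f)(u¹, …, u^q) = γ(((u¹₍₂₎ ⋯ u^{q-1}₍₂₎ u^q) · f)(−, u¹₍₁₎, …, u^{q-1}₍₁₎))`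
on `C^q(U,M)`. -/
theorem stmt_12 (lb : LeftBialgebroid k A U) (lh : LeftHopf k A U lb)
    (M : Type) [AddCommGroup M] [Module k M] [Module U M] [IsScalarTower k U M]
    (C : AYDContra k A U lb lh M) (hstable : C.Stable)
    (n : ℕ) (f : (Fin (n + 1) → U) → M) (hf : IsCochain k A U lb M (n + 1) f)
    -- g := θ⁻¹(f), the corresponding U-linear map on the bar resolution:
    (g : (Fin (n + 2) → U) → M) (hg : ∀ z : Fin (n + 2) → U, g z = z 0 • f (Fin.tail z))
    -- F₁ := η⁻¹(g) ∈ Hom_U(U ⊗_A U^{⊗_{Aᵒᵖ}(n+1)}, M):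
    (F₁ : U → (Fin (n + 1) → U) → M)
    (hF₁ : ∀ (v : U) (u : Fin (n + 1) → U) {κ : Type} [Fintype κ] (x y : κ → U),
      lh.pinv v - ∑ j, x j ⊗ₜ[k] y j ∈ relOp k A U lb.t →
      F₁ v u = ∑ j, g (Fin.cons (x j) (Function.update u 0 (y j * u 0))))
    -- F₂ := tr(F₁) ∈ Hom_U(U^{⊗_{Aᵒᵖ}(n+1)} ⊗_A U, M), where tr is the trace
    -- isomorphism \eqref{hunga} of the weak trace functor Hom_U(-, M):
    (F₂ : (Fin (n + 1) → U) → U → M)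
    (hF₂ : ∀ (u : Fin (n + 1) → U) (v : U) (h : U →ₗ[k] M) (hh : RightALin lb h),
      (∀ w : U, h w = F₁ v (Function.update u 0 (w * u 0))) →
      F₂ u v = C.γ h hh)
    -- g₂ := χ(F₂) ∈ Hom_U(U^{⊗_{Aᵒᵖ}(n+2)}, M):
    (g₂ : (Fin (n + 2) → U) → M)
    (hg₂ : ∀ (u : Fin (n + 1) → U) (v : U) {κ : Type} [Fintype κ]
      (c d : Fin (n + 1) → κ → U),
      (∀ i, lb.comul (u i) - ∑ j, c i j ⊗ₜ[k] d i j ∈ relA k A U lb.s lb.t U U) →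
      g₂ (Fin.snoc u v) =
        ∑ m : Fin (n + 1) → κ,
          F₂ (fun i => c i (m i)) ((List.ofFn fun i => d i (m i)).prod * v)) :
    -- conclusion: θ(g₂) = τ(f), the cocyclic operator \eqref{nadennwommama}
    ∀ (u : Fin (n + 1) → U) {κ : Type} [Fintype κ] (c d : Fin n → κ → U),
      (∀ i : Fin n, lb.comul (u i.castSucc) - ∑ j, c i j ⊗ₜ[k] d i j
        ∈ relA k A U lb.s lb.t U U) →
      ∀ {κ' : Type} [Fintype κ'] (e g' : (Fin n → κ) → κ' → U),
      (∀ m : Fin n → κ,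
        lh.pinv ((List.ofFn fun i => d i (m i)).prod * u (Fin.last n)) -
          ∑ l, e m l ⊗ₜ[k] g' m l ∈ relOp k A U lb.t) →
      ∀ (h : U →ₗ[k] M) (hh : RightALin lb h),
      (∀ w : U, h w =
        ∑ m : Fin n → κ, ∑ l,
          e m l • f (Fin.cons (g' m l * w) (fun i => c i (m i)))) →
      g₂ (Fin.cons 1 u) = C.γ h hh := by
  intro u κ _ c d hcomul κ' _ e g' hpinv h hh hhval
  classical
  set v0 := u (Fin.last n) with hv0
  set c' : Fin (n+1) → Option κ → U :=
    Fin.cons (fun o => o.elim 1 fun _ => 0) (fun i o => o.elim 0 (c i)) with hc'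
  set d' : Fin (n+1) → Option κ → U :=
    Fin.cons (fun o => o.elim 1 fun _ => 0) (fun i o => o.elim 0 (d i)) with hd'
  have hsnoc : (Fin.cons (1:U) u : Fin (n+2) → U) =
      Fin.snoc (Fin.cons (1:U) (Fin.init u)) v0 := by
    rw [← Fin.cons_snoc_eq_snoc_cons, Fin.snoc_init_self]
  have hdecomp : ∀ i : Fin (n+1),
      lb.comul ((Fin.cons (1:U) (Fin.init u) : Fin (n+1) → U) i) -
        ∑ o : Option κ, c' i o ⊗ₜ[k] d' i o ∈ relA k A U lb.s lb.t U U := by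
    intro i
    refine Fin.cases ?_ ?_ i
    · have h1 : ∑ o : Option κ, c' 0 o ⊗ₜ[k] d' 0 o = (1:U) ⊗ₜ[k] (1:U) := by
        rw [Fintype.sum_option]
        simp [hc', hd']
      rw [Fin.cons_zero, h1]
      exact lb.comul_one
    · intro i0
      have h1 : ∑ o : Option κ, c' i0.succ o ⊗ₜ[k] d' i0.succ o =
          ∑ j, c i0 j ⊗ₜ[k] d i0 j := by
        rw [Fintype.sum_option]
        simp [hc', hd']
      rw [Fin.cons_succ, h1]
      exact hcomul i0
  rw [hsnoc, hg₂ (Fin.cons 1 (Fin.init u)) v0 c' d' hdecomp]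
  -- the zero lemma
  have ZL : ∀ (p : Fin (n+1) → U) (v : U) (i : Fin (n+1)), p i = 0 → F₂ p v = 0 := by
    intro p v i hp
    have hz : ∀ w : U, F₁ v (Function.update p 0 (w * p 0)) = 0 := by
      intro w
      obtain ⟨N, x, y, hv⟩ := exists_fin_rep (lh.pinv v)
      rw [hF₁ v _ x y (by rw [hv]; simpa using Submodule.zero_mem _)]
      refine Finset.sum_eq_zero fun j _ => ?_
      rw [hg, Fin.cons_zero, Fin.tail_cons, Function.update_self, Function.update_idem]
      by_cases hi : i = (0 : Fin (n+1))
      · subst hi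
        rw [hp, mul_zero, mul_zero,
          f_zero_slot lb hf _ 0 (Function.update_self 0 0 p), smul_zero]
      · have h2 : Function.update p 0 (y j * (w * p 0)) i = 0 := by
          rw [Function.update_of_ne hi, hp]
        rw [f_zero_slot lb hf _ i h2, smul_zero]
    rw [hF₂ p v 0 (rightALin_zero lb) (fun w => by rw [LinearMap.zero_apply, hz w])]
    exact gamma_zero lb lh C _
  -- the good terms
  have HA : ∀ m' : Fin n → κ,
      RightALin lb (Hm lb hf (fun i => c i (m' i)) (e m') (g' m')) := fun m' =>
    Hm_rightALin lb lh hf _ (e m') (g' m') _ (hpinv m')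
  have hgood : ∀ m' : Fin n → κ,
      F₂ (Fin.cons (1:U) (fun i => c i (m' i)))
        ((List.ofFn fun i => d i (m' i)).prod * v0) =
      C.γ (Hm lb hf (fun i => c i (m' i)) (e m') (g' m')) (HA m') := by
    intro m'
    refine hF₂ _ _ _ (HA m') fun w => ?_
    rw [Hm_apply, Fin.cons_zero, mul_one, Fin.update_cons_zero,
      hF₁ _ _ (e m') (g' m') (hpinv m')]
    refine Finset.sum_congr rfl fun l _ => ?_
    rw [hg, Fin.cons_zero, Fin.tail_cons, Fin.cons_zero, Fin.update_cons_zero]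
  -- reindexing
  set ι : (Fin n → κ) → (Fin (n+1) → Option κ) :=
    fun m' => Fin.cons none (fun i => some (m' i)) with hι
  have hinj : Function.Injective ι := by
    intro a b hab
    funext i
    have h3 := congrFun hab i.succ
    rw [hι] at h3
    simp only [Fin.cons_succ, Option.some.injEq] at h3
    exact h3
  have harg1 : ∀ m' : Fin n → κ,
      (fun i => c' i (ι m' i)) = Fin.cons (1:U) (fun i => c i (m' i)) := by
    intro m'
    funext i
    refine Fin.cases ?_ ?_ i
    · simp [hι, hc']
    · intro i0; simp [hι, hc']
  have harg2 : ∀ m' : Fin n → κ,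
      (List.ofFn fun i => d' i (ι m' i)).prod = (List.ofFn fun i => d i (m' i)).prod := by
    intro m'
    have h4 : (fun i => d' i (ι m' i)) = Fin.cons (1:U) (fun i => d i (m' i)) := by
      funext i
      refine Fin.cases ?_ ?_ i
      · simp [hι, hd']
      · intro i0; simp [hι, hd']
    rw [h4, List.ofFn_succ]
    simp [Fin.cons_succ, Fin.cons_zero]
  calc (∑ m : Fin (n+1) → Option κ,
        F₂ (fun i => c' i (m i)) ((List.ofFn fun i => d' i (m i)).prod * v0))
      = ∑ m ∈ Finset.univ.image ι,
        F₂ (fun i => c' i (m i)) ((List.ofFn fun i => d' i (m i)).prod * v0) := by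
        refine (Finset.sum_subset (Finset.subset_univ _) fun m _ hm => ?_).symm
        by_cases h0 : m 0 = none
        · by_cases hall : ∀ i : Fin n, (m i.succ).isSome
          · exfalso
            apply hm
            refine Finset.mem_image.mpr ⟨fun i => (m i.succ).get (hall i),
              Finset.mem_univ _, ?_⟩
            funext i
            refine Fin.cases ?_ ?_ i
            · rw [hι]; dsimp only; rw [Fin.cons_zero, h0]
            · intro i0; rw [hι]; dsimp only; rw [Fin.cons_succ, Option.some_get]
          · push_neg at hall
            obtain ⟨i0, hi0⟩ := hall
            have hnone : m i0.succ = none := Option.not_isSome_iff_eq_none.mp hi0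
            refine ZL _ _ i0.succ ?_
            rw [hnone, hc']
            simp
        · obtain ⟨j, hj⟩ := Option.ne_none_iff_exists'.mp h0
          refine ZL _ _ 0 ?_
          rw [hj, hc']
          simp
    _ = ∑ m' : Fin n → κ,
        F₂ (fun i => c' i (ι m' i)) ((List.ofFn fun i => d' i (ι m' i)).prod * v0) :=
        Finset.sum_image fun a _ b _ hab => hinj hab
    _ = ∑ m' : Fin n → κ,
        C.γ (Hm lb hf (fun i => c i (m' i)) (e m') (g' m')) (HA m') := by
        refine Finset.sum_congr rfl fun m' _ => ?_
        rw [harg1 m', harg2 m']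
        exact hgood m'
    _ = C.γ (∑ m' : Fin n → κ, Hm lb hf (fun i => c i (m' i)) (e m') (g' m'))
          (rightALin_sum lb _ _ fun m' _ => HA m') :=
        (gamma_sum lb lh C _ _ HA _).symm
    _ = C.γ h hh := by
        refine gamma_congr lb lh C _ hh ?_
        ext w
        rw [LinearMap.sum_apply, hhval w]
        exact Finset.sum_congr rfl fun m' _ => by rw [Hm_apply]

end
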